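/- Let f : 𝔹ⁿ → 𝔹ᵐ be minimal holomorphic with f(0) = 0, let k ≥ 1, N = k + m, and let g = 0 ⊕ f : 𝔹ⁿ → 𝔹ᴺ (z ↦ (0, f(z)) ∈ ℂᵏ × ℂᵐ). Then H_g = U(k) ⊕ I_m, i.e., the automorphisms ψ of 𝔹ᴺ with ψ ∘ g = g are exactly the block unitaries V ⊕ I_m with V ∈ U(k). -/

import Mathlib

noncomputable section
open Metric Set

/-- An automorphism of the unit ball of `EuclideanSpace ℂ ι`: a holomorphic self-map of the
ball with a holomorphic inverse. -/
def IsBallAut {ι : Type} [Fintype ι] (ψ : EuclideanSpace ℂ ι → EuclideanSpace ℂ ι) : Prop :=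
  DifferentiableOn ℂ ψ (ball (0 : EuclideanSpace ℂ ι) 1) ∧
    MapsTo ψ (ball (0 : EuclideanSpace ℂ ι) 1) (ball (0 : EuclideanSpace ℂ ι) 1) ∧
    ∃ φ : EuclideanSpace ℂ ι → EuclideanSpace ℂ ι,
      DifferentiableOn ℂ φ (ball (0 : EuclideanSpace ℂ ι) 1) ∧
      MapsTo φ (ball (0 : EuclideanSpace ℂ ι) 1) (ball (0 : EuclideanSpace ℂ ι) 1) ∧
      (∀ z ∈ ball (0 : EuclideanSpace ℂ ι) 1, φ (ψ z) = z) ∧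
      (∀ z ∈ ball (0 : EuclideanSpace ℂ ι) 1, ψ (φ z) = z)

/-- Schwarz inequality on the ball. -/
lemma schwarz_aux' {E : Type*} [NormedAddCommGroup E] [NormedSpace ℂ E] {ψ : E → E}
    (hd : DifferentiableOn ℂ ψ (ball 0 1)) (hm : MapsTo ψ (ball 0 1) (ball 0 1))
    (h0 : ψ 0 = 0) {x : E} (hx : x ∈ ball (0 : E) 1) : ‖ψ x‖ ≤ ‖x‖ := by
  rcases eq_or_ne x 0 with rfl | hx0
  · simp [h0]
  have hxn : (0 : ℝ) < ‖x‖ := norm_pos_iff.2 hx0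
  set r : ℝ := ‖x‖⁻¹ with hr
  have hr1 : 1 < r := (one_lt_inv₀ hxn).2 (mem_ball_zero_iff.1 hx)
  have hmem : ∀ l : ℂ, l ∈ ball (0 : ℂ) r → l • x ∈ ball (0 : E) 1 := by
    intro l hl
    rw [mem_ball_zero_iff, norm_smul]
    have : ‖l‖ < r := mem_ball_zero_iff.1 hl
    calc ‖l‖ * ‖x‖ < r * ‖x‖ := by gcongr
    _ = 1 := inv_mul_cancel₀ hxn.ne'
  have hhd : DifferentiableOn ℂ (fun l : ℂ => ψ (l • x)) (ball 0 r) := by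
    intro l hl
    exact ((hd.differentiableAt (isOpen_ball.mem_nhds (hmem l hl))).comp l
      (differentiableAt_fun_id.smul_const x)).differentiableWithinAt
  have hmaps : MapsTo (fun l : ℂ => ψ (l • x)) (ball 0 r) (ball (ψ ((0:ℂ) • x)) 1) := by
    intro l hl
    simp only [zero_smul, h0]
    exact mem_ball_zero_iff.2 (mem_ball_zero_iff.1 (hm (hmem l hl)))
  have h1r : (1 : ℂ) ∈ ball (0 : ℂ) r := by
    simpa [mem_ball_zero_iff] using hr1
  have := Complex.dist_le_div_mul_dist_of_mapsTo_ball hhd (hmaps.mono_right ball_subset_closedBall) h1r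
  simpa [h0, dist_eq_norm, hr, inv_inv] using this

/-- Cartan-type rigidity: a norm-preserving holomorphic self-map of the ball fixing `0`
agrees with its derivative at `0`. -/
lemma cartan_aux' {E : Type*} [NormedAddCommGroup E] [NormedSpace ℂ E] [CompleteSpace E]
    [StrictConvexSpace ℝ E] {ψ : E → E}
    (hd : DifferentiableOn ℂ ψ (ball 0 1)) (h0 : ψ 0 = 0)
    (hn : ∀ x ∈ ball (0 : E) 1, ‖ψ x‖ = ‖x‖) :
    ∀ z ∈ ball (0 : E) 1, ψ z = fderiv ℂ ψ 0 z := by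
  intro z hz
  rcases eq_or_ne z 0 with rfl | hz0
  · simp [h0]
  have hzn : (0 : ℝ) < ‖z‖ := norm_pos_iff.2 hz0
  set r : ℝ := ‖z‖⁻¹ with hrdef
  have hr1 : 1 < r := (one_lt_inv₀ hzn).2 (mem_ball_zero_iff.1 hz)
  set h : ℂ → E := fun l => ψ (l • z) with hhdef
  set A : E →L[ℂ] E := fderiv ℂ ψ 0 with hA
  have hmem : ∀ l : ℂ, l ∈ ball (0 : ℂ) r → l • z ∈ ball (0 : E) 1 := by
    intro l hl
    rw [mem_ball_zero_iff, norm_smul]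
    have : ‖l‖ < r := mem_ball_zero_iff.1 hl
    calc ‖l‖ * ‖z‖ < r * ‖z‖ := by gcongr
    _ = 1 := inv_mul_cancel₀ hzn.ne'
  have hhd : DifferentiableOn ℂ h (ball 0 r) := by
    intro l hl
    exact ((hd.differentiableAt (isOpen_ball.mem_nhds (hmem l hl))).comp l
      (differentiableAt_fun_id.smul_const z)).differentiableWithinAt
  have hmaps : MapsTo h (ball 0 r) (ball (h 0) 1) := by
    intro l hl
    have : ‖h l‖ < 1 := by
      rw [hhdef]; simpa [hn _ (hmem l hl)] using mem_ball_zero_iff.1 (hmem l hl)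
    simp only [hhdef, zero_smul, h0]
    exact mem_ball_zero_iff.2 (by simpa [hhdef] using this)
  set u : ℂ → E := dslope h 0 with hu
  have ubound : ∀ l ∈ ball (0 : ℂ) r, ‖u l‖ ≤ ‖z‖ := by
    intro l hl
    have := Complex.norm_dslope_le_div_of_mapsTo_ball hhd (hmaps.mono_right ball_subset_closedBall) hl
    rwa [hrdef, one_div, inv_inv] at this
  have h1r : (1 : ℂ) ∈ ball (0 : ℂ) r := by simpa [mem_ball_zero_iff] using hr1
  have u1 : u 1 = ψ z := by
    rw [hu, dslope_of_ne _ one_ne_zero, slope_def_module]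
    simp [hhdef, h0]
  have hmax : IsMaxOn (norm ∘ u) (ball (0 : ℂ) r) 1 := by
    intro l hl
    have : ‖u l‖ ≤ ‖z‖ := ubound l hl
    simpa [u1, hn z hz] using this
  have h0r : (0 : ℂ) ∈ ball (0 : ℂ) r := mem_ball_self (by positivity)
  have udiff : DifferentiableOn ℂ u (ball 0 r) := by
    intro l hl
    rcases eq_or_ne l 0 with rfl | hl0
    · obtain ⟨p, hp⟩ := (hhd.analyticOnNhd isOpen_ball 0 h0r)
      exact (hp.has_fpower_series_dslope_fslope.analyticAt).differentiableAt.differentiableWithinAt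
    · exact (differentiableWithinAt_dslope_of_ne hl0).2 (hhd l hl)
  have heq := Complex.eqOn_of_isPreconnected_of_isMaxOn_norm
    (convex_ball (0:ℂ) r).isPreconnected isOpen_ball udiff h1r hmax
  have u0 : u 0 = u 1 := heq h0r
  have hderiv : deriv h 0 = A z := by
    have hψ0 : HasFDerivAt ψ A 0 := (hd.differentiableAt
      (isOpen_ball.mem_nhds (mem_ball_self one_pos))).hasFDerivAt
    have hline : HasDerivAt (fun l : ℂ => l • z) z 0 := by
      simpa using (hasDerivAt_id (0 : ℂ)).smul_const z
    have hcomp : HasDerivAt h (A z) 0 :=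
      HasFDerivAt.comp_hasDerivAt 0 (by rw [zero_smul]; exact hψ0) hline
    exact hcomp.deriv
  have : ψ z = u 0 := by rw [u0, u1]
  rw [this, hu, dslope_same, hderiv]

/-- Embedding of the first block. -/
def inKl (k m : ℕ) : EuclideanSpace ℂ (Fin k) →ₗ[ℂ] EuclideanSpace ℂ (Fin k ⊕ Fin m) where
  toFun v := WithLp.toLp 2 (fun i => Sum.elim (fun b => v b) (fun _ => (0 : ℂ)) i)
  map_add' u v := by
    ext i
    cases i with
    | inl b => simp [PiLp.add_apply]
    | inr c => simp [PiLp.add_apply]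
  map_smul' a u := by
    ext i
    cases i with
    | inl b => simp [PiLp.smul_apply, smul_eq_mul]
    | inr c => simp [PiLp.smul_apply]

/-- Embedding of the second block. -/
def inMl (k m : ℕ) : EuclideanSpace ℂ (Fin m) →ₗ[ℂ] EuclideanSpace ℂ (Fin k ⊕ Fin m) where
  toFun u := WithLp.toLp 2 (fun i => Sum.elim (fun _ => (0 : ℂ)) (fun c => u c) i)
  map_add' u v := by
    ext i
    cases i with
    | inl b => simp [PiLp.add_apply]
    | inr c => simp [PiLp.add_apply]
  map_smul' a u := by
    ext i
    cases i with
    | inl b => simp [PiLp.smul_apply]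
    | inr c => simp [PiLp.smul_apply, smul_eq_mul]

lemma eucl_norm_sq {ι : Type} [Fintype ι] (x : EuclideanSpace ℂ ι) :
    ‖x‖ ^ 2 = ∑ i, ‖x i‖ ^ 2 := by
  rw [EuclideanSpace.norm_eq]
  exact Real.sq_sqrt (by positivity)

lemma eucl_norm_split {k m : ℕ} (x : EuclideanSpace ℂ (Fin k ⊕ Fin m)) :
    ‖x‖ ^ 2 = (∑ b, ‖x (Sum.inl b)‖ ^ 2) + ∑ c, ‖x (Sum.inr c)‖ ^ 2 := by
  rw [eucl_norm_sq, Fintype.sum_sum_type]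

lemma eq_norm_of_sq_eq {a b : ℝ} (ha : 0 ≤ a) (hb : 0 ≤ b) (h : a ^ 2 = b ^ 2) : a = b := by
  nlinarith

lemma norm_inMl {k m : ℕ} (u : EuclideanSpace ℂ (Fin m)) : ‖inMl k m u‖ = ‖u‖ := by
  apply eq_norm_of_sq_eq (norm_nonneg _) (norm_nonneg _)
  rw [eucl_norm_split, eucl_norm_sq u]
  simp [inMl]

lemma norm_inKl {k m : ℕ} (v : EuclideanSpace ℂ (Fin k)) : ‖inKl k m v‖ = ‖v‖ := by
  apply eq_norm_of_sq_eq (norm_nonneg _) (norm_nonneg _)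
  rw [eucl_norm_split, eucl_norm_sq v]
  simp [inKl]

/-- for minimal `f : 𝔹ⁿ → 𝔹ᵐ` with `f 0 = 0` and `g = 0 ⊕ f : 𝔹ⁿ → 𝔹ᴺ`
(`N = k + m`, modeled by the index type `Fin k ⊕ Fin m`), the automorphisms `ψ` of `𝔹ᴺ`
with `ψ ∘ g = g` are exactly the block unitaries `V ⊕ I_m`, `V ∈ U(k)`. -/
theorem stmt6 {n m k : ℕ} (hk : 1 ≤ k)
    (f : EuclideanSpace ℂ (Fin n) → EuclideanSpace ℂ (Fin m))
    (hf : DifferentiableOn ℂ f (ball (0 : EuclideanSpace ℂ (Fin n)) 1))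
    (hfm : MapsTo f (ball (0 : EuclideanSpace ℂ (Fin n)) 1) (ball (0 : EuclideanSpace ℂ (Fin m)) 1))
    (hf0 : f 0 = 0)
    (hmin : ∀ s : AffineSubspace ℂ (EuclideanSpace ℂ (Fin m)),
      (∀ z ∈ ball (0 : EuclideanSpace ℂ (Fin n)) 1, f z ∈ s) → s = ⊤)
    (g : EuclideanSpace ℂ (Fin n) → EuclideanSpace ℂ (Fin k ⊕ Fin m))
    (hg : ∀ z, g z = (Sum.elim (fun _ => (0 : ℂ)) (fun j => f z j) : Fin k ⊕ Fin m → ℂ)) :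
    ∀ ψ : EuclideanSpace ℂ (Fin k ⊕ Fin m) → EuclideanSpace ℂ (Fin k ⊕ Fin m), IsBallAut ψ →
      ((∀ z ∈ ball (0 : EuclideanSpace ℂ (Fin n)) 1, ψ (g z) = g z) ↔
        ∃ V : EuclideanSpace ℂ (Fin k) ≃ₗᵢ[ℂ] EuclideanSpace ℂ (Fin k),
          ∀ w ∈ ball (0 : EuclideanSpace ℂ (Fin k ⊕ Fin m)) 1,
            ψ w = (Sum.elim
              (fun a => V ((WithLp.toLp 2 (fun b => w (Sum.inl b))) : EuclideanSpace ℂ (Fin k)) a)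
              (fun c => w (Sum.inr c)) : Fin k ⊕ Fin m → ℂ)) := by
  intro ψ hψ
  obtain ⟨hψd, hψm, φ, hφd, hφm, hφψ, hψφ⟩ := hψ
  -- basic facts about g
  have hgM : ∀ z, g z = inMl k m (f z) := by
    intro z
    ext i
    rw [hg z]
    cases i with
    | inl b => rfl
    | inr c => rfl
  have hgball : ∀ z ∈ ball (0 : EuclideanSpace ℂ (Fin n)) 1,
      g z ∈ ball (0 : EuclideanSpace ℂ (Fin k ⊕ Fin m)) 1 := by
    intro z hz
    rw [mem_ball_zero_iff, hgM z, norm_inMl]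
    exact mem_ball_zero_iff.1 (hfm hz)
  have hg0 : g 0 = 0 := by
    rw [hgM 0, hf0, map_zero]
  constructor
  · -- forward direction
    intro hfix
    have h0ball : (0 : EuclideanSpace ℂ (Fin n)) ∈ ball (0 : EuclideanSpace ℂ (Fin n)) 1 :=
      mem_ball_self one_pos
    have hψ0 : ψ 0 = 0 := by
      have := hfix 0 h0ball
      rwa [hg0] at this
    have hφ0 : φ 0 = 0 := by
      have := hφψ 0 (mem_ball_self one_pos)
      rwa [hψ0] at this
    have hn : ∀ x ∈ ball (0 : EuclideanSpace ℂ (Fin k ⊕ Fin m)) 1, ‖ψ x‖ = ‖x‖ := by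
      intro x hx
      refine le_antisymm (schwarz_aux' hψd hψm hψ0 hx) ?_
      calc ‖x‖ = ‖φ (ψ x)‖ := by rw [hφψ x hx]
      _ ≤ ‖ψ x‖ := schwarz_aux' hφd hφm hφ0 (hψm hx)
    have hlin := cartan_aux' hψd hψ0 hn
    set A : EuclideanSpace ℂ (Fin k ⊕ Fin m) →L[ℂ] EuclideanSpace ℂ (Fin k ⊕ Fin m) :=
      fderiv ℂ ψ 0 with hAdef
    -- A is norm preserving everywhere
    have hAn : ∀ x : EuclideanSpace ℂ (Fin k ⊕ Fin m), ‖A x‖ = ‖x‖ := by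
      intro x
      rcases eq_or_ne x 0 with rfl | hx0
      · simp
      have hxn : (0 : ℝ) < ‖x‖ := norm_pos_iff.2 hx0
      set t : ℝ := (2 * ‖x‖)⁻¹ with ht
      have ht0 : 0 < t := by positivity
      set w : EuclideanSpace ℂ (Fin k ⊕ Fin m) := (t : ℂ) • x with hw
      have hwn : ‖w‖ = t * ‖x‖ := by
        rw [hw, norm_smul, Complex.norm_real, Real.norm_eq_abs, abs_of_pos ht0]
      have hwval : t * ‖x‖ = 1 / 2 := by
        rw [ht]; field_simp
      have hwb : w ∈ ball (0 : EuclideanSpace ℂ (Fin k ⊕ Fin m)) 1 := by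
        rw [mem_ball_zero_iff, hwn, hwval]; norm_num
      have h1 : ‖A w‖ = ‖w‖ := by
        rw [← hlin w hwb]; exact hn w hwb
      have h2 : A w = (t : ℂ) • A x := by rw [hw, map_smul]
      rw [h2, norm_smul, Complex.norm_real, Real.norm_eq_abs, abs_of_pos ht0, hwn] at h1
      exact mul_left_cancel₀ ht0.ne' h1
    set AL : EuclideanSpace ℂ (Fin k ⊕ Fin m) →ₗᵢ[ℂ] EuclideanSpace ℂ (Fin k ⊕ Fin m) :=
      ⟨A.toLinearMap, hAn⟩ with hALdef
    have hinner : ∀ x y : EuclideanSpace ℂ (Fin k ⊕ Fin m),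
        (inner ℂ (A x) (A y) : ℂ) = inner ℂ x y := fun x y => AL.inner_map_map x y
    -- A fixes the M block pointwise
    have hfixM : ∀ u : EuclideanSpace ℂ (Fin m), A (inMl k m u) = inMl k m u := by
      set T : Submodule ℂ (EuclideanSpace ℂ (Fin m)) :=
        Submodule.comap (inMl k m) (LinearMap.ker (A.toLinearMap - LinearMap.id)) with hT
      have hmemT : ∀ u, u ∈ T ↔ A (inMl k m u) = inMl k m u := by
        intro u
        rw [hT]
        simp only [Submodule.mem_comap, LinearMap.mem_ker, LinearMap.sub_apply,
          LinearMap.id_apply, sub_eq_zero]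
        rfl
      have hST : ∀ z ∈ ball (0 : EuclideanSpace ℂ (Fin n)) 1, f z ∈ T := by
        intro z hz
        rw [hmemT, ← hgM z]
        rw [← hlin (g z) (hgball z hz)]
        exact hfix z hz
      have hTtop : T = ⊤ := by
        have := hmin T.toAffineSubspace (fun z hz => Submodule.mem_toAffineSubspace.2 (hST z hz))
        refine Submodule.eq_top_iff'.2 fun u => Submodule.mem_toAffineSubspace.1 ?_
        rw [this]
        exact AffineSubspace.mem_top ℂ _ u
      intro u
      exact (hmemT u).1 (hTtop ▸ Submodule.mem_top)
    -- A maps the K block into the K block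
    have hAk0 : ∀ (v : EuclideanSpace ℂ (Fin k)) (c : Fin m),
        A (inKl k m v) (Sum.inr c) = 0 := by
      intro v c
      set e : EuclideanSpace ℂ (Fin k ⊕ Fin m) := EuclideanSpace.single (Sum.inr c) (1 : ℂ)
        with he
      have heM : e = inMl k m (EuclideanSpace.single c (1 : ℂ)) := by
        ext i
        cases i with
        | inl b => simp [he, inMl, EuclideanSpace.single_apply]
        | inr c' => simp [he, inMl, EuclideanSpace.single_apply]
      have hAe : A e = e := by rw [heM]; exact hfixM _
      have := hinner (inKl k m v) e
      rw [hAe, he, EuclideanSpace.inner_single_right, EuclideanSpace.inner_single_right,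
        one_mul, one_mul] at this
      have hz : ((starRingEnd ℂ) (inKl k m v (Sum.inr c))) = (starRingEnd ℂ) 0 := by
        rw [map_zero]
        calc (starRingEnd ℂ) (inKl k m v (Sum.inr c)) = (starRingEnd ℂ) 0 := by
              norm_num [inKl]
        _ = 0 := map_zero _
      rw [hz, map_zero] at this
      simpa using this
    -- the unitary on the K block
    set V0 : EuclideanSpace ℂ (Fin k) →ₗᵢ[ℂ] EuclideanSpace ℂ (Fin k) :=
      { toFun := fun v => (WithLp.toLp 2 (fun b => A (inKl k m v) (Sum.inl b)) : EuclideanSpace ℂ (Fin k))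
        map_add' := by
          intro u v
          ext b
          simp only [map_add, PiLp.add_apply, PiLp.toLp_apply]
        map_smul' := by
          intro a u
          ext b
          simp only [map_smul, PiLp.smul_apply, RingHom.id_apply, PiLp.toLp_apply]
        norm_map' := by
          intro v
          apply eq_norm_of_sq_eq (norm_nonneg _) (norm_nonneg _)
          have h1 : ‖A (inKl k m v)‖ ^ 2 = ‖v‖ ^ 2 := by rw [hAn, norm_inKl]
          rw [eucl_norm_sq]
          calc (∑ b, ‖A (inKl k m v) (Sum.inl b)‖ ^ 2)
              = (∑ b, ‖A (inKl k m v) (Sum.inl b)‖ ^ 2)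
                + ∑ c, ‖A (inKl k m v) (Sum.inr c)‖ ^ 2 := by
                simp [hAk0 v]
          _ = ‖A (inKl k m v)‖ ^ 2 := (eucl_norm_split _).symm
          _ = ‖v‖ ^ 2 := h1 } with hV0def
    refine ⟨V0.toLinearIsometryEquiv rfl, ?_⟩
    intro w hw
    have hdecomp : w = inKl k m (WithLp.toLp 2 fun b => w (Sum.inl b)) + inMl k m (WithLp.toLp 2 fun c => w (Sum.inr c)) := by
      ext i
      cases i with
      | inl b => simp [inKl, inMl, PiLp.add_apply]
      | inr c => simp [inKl, inMl, PiLp.add_apply]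
    have hAw : ψ w = A w := hlin w hw
    rw [hAw]
    funext i
    have : A w = A (inKl k m (WithLp.toLp 2 fun b => w (Sum.inl b)))
        + inMl k m (WithLp.toLp 2 fun c => w (Sum.inr c)) := by
      conv_lhs => rw [hdecomp]
      rw [map_add, hfixM]
    rw [this]
    cases i with
    | inl b =>
      simp only [PiLp.add_apply, Sum.elim_inl, LinearIsometry.coe_toLinearIsometryEquiv]
      simp [inMl, hV0def]
    | inr c =>
      simp only [PiLp.add_apply, Sum.elim_inr]
      rw [hAk0]
      simp [inMl]
  · -- converse direction
    rintro ⟨V, hV⟩ z hz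
    have := hV (g z) (hgball z hz)
    apply WithLp.ofLp_injective
    rw [this]
    have hk0 : ((WithLp.toLp 2 fun b => g z (Sum.inl b)) : EuclideanSpace ℂ (Fin k)) = 0 := by
      ext b
      rw [hg z]
      rfl
    rw [hk0, map_zero]
    funext i
    cases i with
    | inl b => rw [hg z]; rfl
    | inr c => rfl
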